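/- Let ≪ be a transitive, irreflexive binary relation on a set M, and let φ : M → M be a bijection that is ≪-equivariant and timelike. Then for every x ∈ M, the set U := ⋃_{n ∈ ℕ} I⁻(φⁿ(x)) is a TIP, and moreover φ(U) = U. -/
import Mathlib


open Set Filter Topology MeasureTheory

/-- The chronological past of a set `A` with respect to relation `r`. -/
def chronPast {M : Type*} (r : M → M → Prop) (A : Set M) : Set M :=
  {x | ∃ y ∈ A, r x y}

/-- The chronological future of a set `A` with respect to relation `r`. -/
def chronFut {M : Type*} (r : M → M → Prop) (A : Set M) : Set M :=
  {x | ∃ y ∈ A, r y x}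

/-- A past set: `I⁻(U) = U`. -/
def IsPastSet {M : Type*} (r : M → M → Prop) (U : Set M) : Prop :=
  chronPast r U = U

/-- A future set: `I⁺(U) = U`. -/
def IsFutureSet {M : Type*} (r : M → M → Prop) (U : Set M) : Prop :=
  chronFut r U = U

/-- An indecomposable past set (IP): a nonempty past set that is not the union of
two past sets, each a proper subset of it. -/
def IsIP {M : Type*} (r : M → M → Prop) (U : Set M) : Prop :=
  U.Nonempty ∧ IsPastSet r U ∧
    ¬ ∃ A B : Set M, IsPastSet r A ∧ IsPastSet r B ∧ A ⊂ U ∧ B ⊂ U ∧ A ∪ B = U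

/-- An indecomposable future set (IF). -/
def IsIF {M : Type*} (r : M → M → Prop) (U : Set M) : Prop :=
  U.Nonempty ∧ IsFutureSet r U ∧
    ¬ ∃ A B : Set M, IsFutureSet r A ∧ IsFutureSet r B ∧ A ⊂ U ∧ B ⊂ U ∧ A ∪ B = U

/-- A terminal indecomposable past set (TIP): an IP not of the form `I⁻(p)`. -/
def IsTIP {M : Type*} (r : M → M → Prop) (U : Set M) : Prop :=
  IsIP r U ∧ ∀ p : M, U ≠ chronPast r {p}

/-- A terminal indecomposable future set (TIF): an IF not of the form `I⁺(p)`. -/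
def IsTIF {M : Type*} (r : M → M → Prop) (U : Set M) : Prop :=
  IsIF r U ∧ ∀ p : M, U ≠ chronFut r {p}

/-- A minimal TIP: a TIP containing no TIP as a proper subset. -/
def IsMinTIP {M : Type*} (r : M → M → Prop) (U : Set M) : Prop :=
  IsTIP r U ∧ ∀ V : Set M, IsTIP r V → V ⊆ U → V = U

/-- For a transitive irreflexive relation and a timelike equivariant
bijection `φ`, the set `⋃ n, I⁻(φⁿ x)` is a TIP invariant under `φ`. -/
theorem stmt_1 {M : Type*} (r : M → M → Prop)
    (htrans : Transitive r) (hirr : Irreflexive r)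
    (φ : M → M) (hbij : Function.Bijective φ)
    (hequiv : ∀ x y : M, r x y ↔ r (φ x) (φ y))
    (htimelike : ∀ x : M, r x (φ x)) (x : M) :
    IsTIP r (⋃ n : ℕ, chronPast r {φ^[n] x}) ∧
      φ '' (⋃ n : ℕ, chronPast r {φ^[n] x}) = ⋃ n : ℕ, chronPast r {φ^[n] x} := by

  set U := ⋃ n : ℕ, chronPast r {φ^[n] x} with hU
  have hUmem : ∀ z, z ∈ U ↔ ∃ n, r z (φ^[n] x) := by
    intro z; simp [hU, chronPast]
  have hstep : ∀ n : ℕ, r (φ^[n] x) (φ^[n + 1] x) := by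
    intro n; rw [Function.iterate_succ_apply']; exact htimelike _
  have hmono : ∀ (z : M) (m k : ℕ), r z (φ^[m] x) → r z (φ^[m + k] x) := by
    intro z m k h
    induction k with
    | zero => exact h
    | succ k ih => exact htrans ih (hstep (m + k))
  have hmono' : ∀ (z : M) (m n : ℕ), m ≤ n → r z (φ^[m] x) → r z (φ^[n] x) := by
    intro z m n hmn h
    obtain ⟨k, rfl⟩ := Nat.exists_eq_add_of_le hmn
    exact hmono z m k h
  have hxU : ∀ n, φ^[n] x ∈ U := fun n => (hUmem _).2 ⟨n + 1, hstep n⟩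
  have hpast : IsPastSet r U := by
    ext z
    constructor
    · rintro ⟨y, hyU, hzy⟩
      obtain ⟨n, hn⟩ := (hUmem y).1 hyU
      exact (hUmem z).2 ⟨n, htrans hzy hn⟩
    · intro hz
      obtain ⟨n, hn⟩ := (hUmem z).1 hz
      exact ⟨φ^[n] x, hxU n, hn⟩
  obtain ⟨ψ, hψφ, hφψ⟩ : ∃ ψ : M → M, (∀ a, ψ (φ a) = a) ∧ ∀ a, φ (ψ a) = a := by
    obtain ⟨ψ, h1, h2⟩ := Function.bijective_iff_has_inverse.1 hbij
    exact ⟨ψ, h1, h2⟩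
  refine ⟨⟨⟨⟨x, (hUmem x).2 ⟨1, by simpa using htimelike x⟩⟩, hpast, ?_⟩, ?_⟩, ?_⟩
  · rintro ⟨A, B, hA, hB, hAU, hBU, hAB⟩
    obtain ⟨a, haU, haA⟩ := Set.exists_of_ssubset hAU
    obtain ⟨b, hbU, hbB⟩ := Set.exists_of_ssubset hBU
    obtain ⟨n, hn⟩ := (hUmem a).1 haU
    obtain ⟨m, hm⟩ := (hUmem b).1 hbU
    set k := max n m
    have ha' : r a (φ^[k] x) := hmono' a n k (le_max_left n m) hn
    have hb' : r b (φ^[k] x) := hmono' b m k (le_max_right n m) hm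
    have hk : φ^[k] x ∈ A ∪ B := hAB ▸ hxU k
    rcases hk with hk | hk
    · exact haA (hA ▸ ⟨φ^[k] x, hk, ha'⟩)
    · exact hbB (hB ▸ ⟨φ^[k] x, hk, hb'⟩)
  · intro p hp
    have hq : ψ p ∈ U := by
      rw [hp]
      exact ⟨p, rfl, by simpa [hφψ p] using htimelike (ψ p)⟩
    obtain ⟨n, hn⟩ := (hUmem (ψ p)).1 hq
    have : r p (φ^[n + 1] x) := by
      rw [Function.iterate_succ_apply']
      simpa [hφψ p] using (hequiv (ψ p) (φ^[n] x)).1 hn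
    have hpU : p ∈ U := (hUmem p).2 ⟨n + 1, this⟩
    rw [hp] at hpU
    obtain ⟨q, hq1, hq2⟩ := hpU
    rw [Set.mem_singleton_iff] at hq1
    exact hirr p (hq1 ▸ hq2)
  · ext u
    constructor
    · rintro ⟨z, hz, rfl⟩
      obtain ⟨n, hn⟩ := (hUmem z).1 hz
      refine (hUmem (φ z)).2 ⟨n + 1, ?_⟩
      rw [Function.iterate_succ_apply']
      exact (hequiv z (φ^[n] x)).1 hn
    · intro hu
      obtain ⟨n, hn⟩ := (hUmem u).1 hu
      have hn' : r u (φ^[n + 1] x) := hmono' u n (n + 1) (Nat.le_succ n) hn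
      refine ⟨ψ u, (hUmem (ψ u)).2 ⟨n, ?_⟩, hφψ u⟩
      apply (hequiv (ψ u) (φ^[n] x)).2
      rw [hφψ u, (Function.iterate_succ_apply' φ n x).symm]
      exact hn'
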